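/- In the bi-Cayley Jordan triple system T_B on B = C ⊕ C, every element x satisfies Q_x(x) = q(x)·x, where q(x₁,x₂) = n(x₁) + n(x₂). Consequently, every automorphism of T_B is an isometry of the quadratic form q: Aut(T_B) ≤ O(B,q). -/
import Mathlib

/-- The standard involution of a composition algebra:
`x̄ = n(x,1)·1 - x`, where `n(·,·)` is the polar form of the norm `n`. -/
def ocConj (F : Type) [Field F] (C : Type) [NonAssocRing C] [Module F C]
    (n : QuadraticForm F C) (x : C) : C :=
  QuadraticMap.polar n x 1 • (1 : C) - x

/-- The quadratic operator of the bi-Cayley Jordan pair / triple system on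
`B = C ⊕ C`:
`Q_x(y) = (x₁ȳ₁x₁ + x̄₂(y₂x₁), x₂ȳ₂x₂ + (x₂y₁)x̄₁)`. -/
def biQ (F : Type) [Field F] (C : Type) [NonAssocRing C] [Module F C]
    (n : QuadraticForm F C) (x y : C × C) : C × C :=
  ((x.1 * ocConj F C n y.1) * x.1 + ocConj F C n x.2 * (y.2 * x.1),
   (x.2 * ocConj F C n y.2) * x.2 + (x.2 * y.1) * ocConj F C n x.1)

section Aux

variable (F : Type) [Field F] (C : Type) [NonAssocRing C] [Module F C]
    [SMulCommClass F C C] [IsScalarTower F C C]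
    (n : QuadraticForm F C)

open QuadraticMap

/-- Linearization of the composition law in the right variable. -/
lemma polA (hcomp : ∀ x y : C, n (x * y) = n x * n y) (x y z : C) :
    polar n (x * y) (x * z) = n x * polar n y z := by
  simp only [QuadraticMap.polar, ← mul_add, hcomp]
  ring

/-- Linearization of the composition law in the left variable. -/
lemma polB (hcomp : ∀ x y : C, n (x * y) = n x * n y) (x y z : C) :
    polar n (x * z) (y * z) = polar n x y * n z := by
  simp only [QuadraticMap.polar, ← add_mul, hcomp]
  ring

/-- Full linearization of the composition law. -/
lemma polC (hcomp : ∀ x y : C, n (x * y) = n x * n y) (x y z w : C) :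
    polar n (x * y) (z * w) + polar n (z * y) (x * w)
      = polar n x z * polar n y w := by
  have h := polA F C n hcomp (x + z) y w
  rw [add_mul, add_mul, QuadraticMap.polar_add_left, QuadraticMap.polar_add_right,
    QuadraticMap.polar_add_right] at h
  have hx := polA F C n hcomp x y w
  have hz := polA F C n hcomp z y w
  have hn : n (x + z) = polar n x z + n x + n z := by
    simp [QuadraticMap.polar]; ring
  rw [hx, hz, hn] at h
  linear_combination h

lemma ocConj_mul_left (x z : C) :
    ocConj F C n x * z = polar n x 1 • z - x * z := by
  rw [ocConj, sub_mul, smul_mul_assoc, one_mul]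

lemma ocMul_conj_right (x z : C) :
    z * ocConj F C n x = polar n x 1 • z - z * x := by
  rw [ocConj, mul_sub, mul_smul_comm, mul_one]

/-- left adjoint: ⟨xy, z⟩ = ⟨y, x̄z⟩. -/
lemma adjL (hcomp : ∀ x y : C, n (x * y) = n x * n y) (x y z : C) :
    polar n (x * y) z = polar n y (ocConj F C n x * z) := by
  have h := polC F C n hcomp x y 1 z
  rw [one_mul] at h
  rw [ocConj_mul_left, QuadraticMap.polar_sub_right, QuadraticMap.polar_smul_right]
  have : polar n (1 * y) (x * z) = polar n y (x * z) := by rw [one_mul]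
  rw [this] at h
  rw [smul_eq_mul]
  linear_combination h

/-- right adjoint: ⟨yx, z⟩ = ⟨y, zx̄⟩. -/
lemma adjR (hcomp : ∀ x y : C, n (x * y) = n x * n y) (x y z : C) :
    polar n (y * x) z = polar n y (z * ocConj F C n x) := by
  have h := polC F C n hcomp y x z 1
  rw [mul_one, mul_one] at h
  rw [ocMul_conj_right, QuadraticMap.polar_sub_right, QuadraticMap.polar_smul_right]
  rw [QuadraticMap.polar_comm n (z * x) y] at h
  rw [smul_eq_mul]
  linear_combination h

lemma norm_one (hcomp : ∀ x y : C, n (x * y) = n x * n y)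
    (hnd : ∀ x : C, (∀ y : C, QuadraticMap.polar n x y = 0) → x = 0)
    (hdim : Module.finrank F C = 8) : n 1 = 1 := by
  have h : n 1 * n 1 = n 1 := by rw [← hcomp, one_mul]
  by_cases h0 : n 1 = 0
  · exfalso
    have hz : ∀ x : C, n x = 0 := fun x => by
      rw [← mul_one x, hcomp, h0, mul_zero]
    have h1 : (1 : C) = 0 := hnd 1 (fun y => by
      simp [QuadraticMap.polar, hz])
    have hsub : Subsingleton C := ⟨fun a b => by
      have : ∀ c : C, c = 0 := fun c => by
        calc c = c * 1 := (mul_one c).symm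
        _ = c * 0 := by rw [h1]
        _ = 0 := mul_zero c
      rw [this a, this b]⟩
    rw [Module.finrank_zero_of_subsingleton] at hdim
    exact (by norm_num : (0:ℕ) ≠ 8) hdim
  · exact mul_left_cancel₀ h0 (by rw [h, mul_one])


lemma polar_conj_one (hcomp : ∀ x y : C, n (x * y) = n x * n y)
    (hnd : ∀ x : C, (∀ y : C, QuadraticMap.polar n x y = 0) → x = 0)
    (hdim : Module.finrank F C = 8) (x : C) :
    polar n (ocConj F C n x) 1 = polar n x 1 := by
  rw [ocConj, QuadraticMap.polar_sub_left, QuadraticMap.polar_smul_left,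
    QuadraticMap.polar_self, norm_one F C n hcomp hnd hdim]
  simp
  ring

lemma conj_conj (hcomp : ∀ x y : C, n (x * y) = n x * n y)
    (hnd : ∀ x : C, (∀ y : C, QuadraticMap.polar n x y = 0) → x = 0)
    (hdim : Module.finrank F C = 8) (x : C) :
    ocConj F C n (ocConj F C n x) = x := by
  rw [ocConj, polar_conj_one F C n hcomp hnd hdim, ocConj, sub_sub_cancel]

/-- x̄ (x y) = n(x) y. -/
lemma kirmse1 (hcomp : ∀ x y : C, n (x * y) = n x * n y)
    (hnd : ∀ x : C, (∀ y : C, QuadraticMap.polar n x y = 0) → x = 0)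
    (hdim : Module.finrank F C = 8) (x y : C) :
    ocConj F C n x * (x * y) = n x • y := by
  have key : ∀ z : C, polar n (ocConj F C n x * (x * y) - n x • y) z = 0 := by
    intro z
    rw [QuadraticMap.polar_sub_left, QuadraticMap.polar_smul_left,
      adjL F C n hcomp (ocConj F C n x) (x * y) z,
      conj_conj F C n hcomp hnd hdim, polA F C n hcomp]
    simp [QuadraticMap.polar_comm n (x * y)]
  have := hnd _ key
  exact sub_eq_zero.mp this

/-- (y x) x̄ = n(x) y. -/
lemma kirmse2 (hcomp : ∀ x y : C, n (x * y) = n x * n y)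
    (hnd : ∀ x : C, (∀ y : C, QuadraticMap.polar n x y = 0) → x = 0)
    (hdim : Module.finrank F C = 8) (x y : C) :
    (y * x) * ocConj F C n x = n x • y := by
  have key : ∀ z : C, polar n ((y * x) * ocConj F C n x - n x • y) z = 0 := by
    intro z
    rw [QuadraticMap.polar_sub_left, QuadraticMap.polar_smul_left,
      adjR F C n hcomp (ocConj F C n x) ((y * x)) z,
      conj_conj F C n hcomp hnd hdim, polB F C n hcomp]
    simp
    ring
  have := hnd _ key
  exact sub_eq_zero.mp this

/-- x x̄ = n(x) 1. -/
lemma mul_self_conj (hcomp : ∀ x y : C, n (x * y) = n x * n y)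
    (hnd : ∀ x : C, (∀ y : C, QuadraticMap.polar n x y = 0) → x = 0)
    (hdim : Module.finrank F C = 8) (x : C) :
    x * ocConj F C n x = n x • (1 : C) := by
  have h := kirmse2 F C n hcomp hnd hdim x 1
  rwa [one_mul] at h

end Aux

theorem stmt_12 (F : Type) [Field F] (hchar : (2 : F) ≠ 0)
    (C : Type) [NonAssocRing C] [Module F C] [SMulCommClass F C C] [IsScalarTower F C C]
    (n : QuadraticForm F C)
    (hcomp : ∀ x y : C, n (x * y) = n x * n y)
    (hnd : ∀ x : C, (∀ y : C, QuadraticMap.polar n x y = 0) → x = 0)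
    (hdim : Module.finrank F C = 8) :
    (∀ x : C × C, biQ F C n x x = (n x.1 + n x.2) • x) ∧
    (∀ f : (C × C) ≃ₗ[F] (C × C),
      (∀ x y : C × C, f (biQ F C n x y) = biQ F C n (f x) (f y)) →
      ∀ x : C × C, n (f x).1 + n (f x).2 = n x.1 + n x.2) := by
  have part1 : ∀ x : C × C, biQ F C n x x = (n x.1 + n x.2) • x := by
    intro x
    have h1 : (x.1 * ocConj F C n x.1) * x.1 = n x.1 • x.1 := by
      rw [mul_self_conj F C n hcomp hnd hdim, smul_mul_assoc, one_mul]
    have h2 : ocConj F C n x.2 * (x.2 * x.1) = n x.2 • x.1 :=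
      kirmse1 F C n hcomp hnd hdim x.2 x.1
    have h3 : (x.2 * ocConj F C n x.2) * x.2 = n x.2 • x.2 := by
      rw [mul_self_conj F C n hcomp hnd hdim, smul_mul_assoc, one_mul]
    have h4 : (x.2 * x.1) * ocConj F C n x.1 = n x.1 • x.2 :=
      kirmse2 F C n hcomp hnd hdim x.1 x.2
    show (_, _) = _
    rw [h1, h2, h3, h4, Prod.smul_def]
    refine Prod.ext ?_ ?_ <;> simp [add_smul, add_comm]
  refine ⟨part1, fun f hf x => ?_⟩
  have h := hf x x
  rw [part1 x, part1 (f x), map_smul] at h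
  by_cases hx : f x = 0
  · have hx0 : x = 0 := by
      apply f.injective; rw [hx, map_zero]
    subst hx0
    simp [hx]
  · have h' : ((n x.1 + n x.2) - (n (f x).1 + n (f x).2)) • f x = 0 := by
      rw [sub_smul, h, sub_self]
    rcases smul_eq_zero.mp h' with h'' | h''
    · linear_combination -h''
    · exact absurd h'' hx
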